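/- Let E ⊆ ℝ^d be a compact domain whose boundary ∂E is lower Ahlfors (d−1)-regular at scale η_{∂E} ≥ 1 with constant κ_{∂E}, let 0 < W_i ≤ L (i = 1,…,d), W_max = max_i W_i, L ≥ W_max, s ≥ 1 and 0 < δ < 1. With M_j and the intervals D_{j_i}^{(i)} as in the local trigonometric construction, define Γ^{med} = {(j,k) ∈ ℤ^d × ℤ^d : min_i |D_{j_i}^{(i)}| ≥ δ and dist(k, M_j E_L) < s and dist(k, M_j E_L^c) < s}. Then there exists a constant C_d, depending only on d, such that #Γ^{med} ≤ C_d · max{W_max, 1/η_{∂E}}^{d−1} · (|∂E|/κ_{∂E}) · max{log(W_max/δ), 1}^d · s^d. -/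

import Mathlib

open MeasureTheory Set Filter
open scoped ENNReal NNReal Classical

set_option maxHeartbeats 1000000
noncomputable section

/-- The eigenvalue/singular-value sequence of an operator, listed with multiplicity:
`eigSeq S n = inf {‖S - S₀‖ : rank S₀ < n+1}` (so `eigSeq S (k-1)` is the paper's `λ_k`). -/
def eigSeq {H : Type*} [NormedAddCommGroup H] [NormedSpace ℂ H] (S : H →L[ℂ] H) (n : ℕ) : ℝ :=
  sInf {r : ℝ | ∃ S₀ : H →L[ℂ] H,
    Module.rank ℂ (LinearMap.range (S₀ : H →ₗ[ℂ] H)) < ((n + 1 : ℕ) : Cardinal) ∧ r = ‖S - S₀‖}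

/-- `X` is lower Ahlfors `(d-1)`-regular at scale `η` with constant `κ`. -/
def LowerAhlfors (d : ℕ) (X : Set (EuclideanSpace ℝ (Fin d))) (η κ : ℝ) : Prop :=
  ∀ x ∈ X, ∀ r : ℝ, 0 < r → r ≤ η →
    ENNReal.ofReal (κ * r ^ ((d : ℝ) - 1)) ≤ μH[(d : ℝ) - 1] (X ∩ Metric.ball x r)

/-- `X` is maximally Ahlfors regular with constant `κ`: lower Ahlfors `(d-1)`-regular at the
scale `H^{d-1}(X)^{1/(d-1)}`. -/
def MaxAhlfors (d : ℕ) (X : Set (EuclideanSpace ℝ (Fin d))) (κ : ℝ) : Prop :=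
  ∀ x ∈ X, ∀ r : ℝ, 0 < r →
    ENNReal.ofReal r ≤ (μH[(d : ℝ) - 1] X) ^ (1 / ((d : ℝ) - 1)) →
    ENNReal.ofReal (κ * r ^ ((d : ℝ) - 1)) ≤ μH[(d : ℝ) - 1] (X ∩ Metric.ball x r)

/-- Membership in the lattice `L⁻¹ ℤ^d`. -/
def latticePt (d : ℕ) (L : ℝ) (x : EuclideanSpace ℝ (Fin d)) : Prop :=
  ∀ i, ∃ k : ℤ, x i = k / L

/-- The discretization `E_L = L⁻¹ℤ^d ∩ E` of a set `E ⊆ ℝ^d` at resolution `L`. -/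
def discretization (d : ℕ) (L : ℝ) (E : Set (EuclideanSpace ℝ (Fin d))) :
    Set (EuclideanSpace ℝ (Fin d)) :=
  {x | x ∈ E ∧ latticePt d L x}

/-- Center `x_j = sign(j)·(W/2)·(1 - 2^{-|j|})` of the dyadic decomposition of `(-W/2, W/2)`. -/
def xJ (W : ℝ) (j : ℤ) : ℝ := (Int.sign j : ℝ) * (W / 2) * (1 - (2 : ℝ)⁻¹ ^ j.natAbs)

/-- Length of the interval `I_j = x_j + (W/(3·2^{|j|+1}))·[-1,1)`. -/
def lenI (W : ℝ) (j : ℤ) : ℝ := W / (3 * 2 ^ j.natAbs)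

/-- Length of `D_j = I_j ∪ I_{j+1}`. -/
def lenD (W : ℝ) (j : ℤ) : ℝ := lenI W j + lenI W (j + 1)

/-- The discrete boundary `∂E_L` of the discretization `E_L`: points of `E_L` at distance
exactly `1/L` from `E_L^c = L⁻¹ℤ^d ∖ E_L`. -/
def dBdryL (d : ℕ) (L : ℝ) (E : Set (EuclideanSpace ℝ (Fin d))) :
    Set (EuclideanSpace ℝ (Fin d)) :=
  {x | x ∈ discretization d L E ∧
    ∃ y : EuclideanSpace ℝ (Fin d), latticePt d L y ∧ y ∉ E ∧ dist x y = 1 / L}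

/-- Euclidean distance from the integer point `k` to the point `M_j y`, where
`M_j = diag(|D_{j_1}|, …, |D_{j_d}|)`. -/
def Mdist (d : ℕ) (W : Fin d → ℝ) (j k : Fin d → ℤ) (y : EuclideanSpace ℝ (Fin d)) : ℝ :=
  Real.sqrt (∑ i, ((k i : ℝ) - lenD (W i) (j i) * y i) ^ 2)

/-! ### Auxiliary lemmas -/

lemma lenD_pos {W : ℝ} (hW : 0 < W) (j : ℤ) : 0 < lenD W j := by
  unfold lenD lenI; positivity

lemma lenD_le_half {W : ℝ} (hW : 0 < W) (j : ℤ) : lenD W j ≤ W / 2 := by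
  unfold lenD lenI
  rcases eq_or_ne j 0 with rfl | h0
  · norm_num; linarith
  rcases eq_or_ne j (-1) with rfl | h1
  · norm_num; linarith
  have ha : 1 ≤ j.natAbs := by omega
  have hb : 1 ≤ (j + 1).natAbs := by omega
  have h2a : (2:ℝ) ≤ 2 ^ j.natAbs := by
    calc (2:ℝ) = 2 ^ 1 := by norm_num
    _ ≤ 2 ^ j.natAbs := by exact pow_le_pow_right₀ one_le_two ha
  have h2b : (2:ℝ) ≤ 2 ^ (j+1).natAbs := by
    calc (2:ℝ) = 2 ^ 1 := by norm_num
    _ ≤ 2 ^ (j+1).natAbs := by exact pow_le_pow_right₀ one_le_two hb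
  have : W / (3 * 2 ^ j.natAbs) ≤ W / 6 := by
    apply div_le_div_of_nonneg_left hW.le (by norm_num) (by nlinarith)
  have : W / (3 * 2 ^ (j+1).natAbs) ≤ W / 6 := by
    apply div_le_div_of_nonneg_left hW.le (by norm_num) (by nlinarith)
  linarith

lemma lenD_le_pow {W : ℝ} (hW : 0 < W) (j : ℤ) : lenD W j ≤ W / 2 ^ j.natAbs := by
  unfold lenD lenI
  have hb : j.natAbs ≤ (j + 1).natAbs + 1 := by omega
  have h2b : (2:ℝ) ^ j.natAbs ≤ 2 * 2 ^ (j+1).natAbs := by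
    calc (2:ℝ) ^ j.natAbs ≤ 2 ^ ((j+1).natAbs + 1) := pow_le_pow_right₀ one_le_two hb
    _ = 2 * 2 ^ (j+1).natAbs := by ring
  have hp : (0:ℝ) < 2 ^ j.natAbs := by positivity
  have hq : (0:ℝ) < 2 ^ (j+1).natAbs := by positivity
  have key : W / (3 * 2 ^ (j+1).natAbs) ≤ 2 * W / (3 * 2 ^ j.natAbs) := by
    rw [div_le_div_iff₀ (by positivity) (by positivity)]
    nlinarith [hW.le]
  have : W / (3 * 2 ^ j.natAbs) + 2 * W / (3 * 2 ^ j.natAbs) = W / 2 ^ j.natAbs := by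
    field_simp; ring
  linarith

/-- Greedy separated subcover of a finite set. -/
lemma sep_cover {α : Type*} [MetricSpace α] (r : ℝ) (hr : 0 < r) (P : Finset α) :
    ∃ S : Finset α, S ⊆ P ∧ (∀ a ∈ S, ∀ b ∈ S, a ≠ b → r ≤ dist a b) ∧
      ∀ p ∈ P, ∃ z ∈ S, dist p z < r := by
  classical
  induction P using Finset.strongInduction with
  | _ P ih =>
    rcases P.eq_empty_or_nonempty with rfl | ⟨p, hp⟩
    · exact ⟨∅, by simp⟩
    · have hss : P.filter (fun q => r ≤ dist q p) ⊂ P := by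
        apply Finset.filter_ssubset.2
        exact ⟨p, hp, by simp [hr.not_ge]⟩
      obtain ⟨S, hSP, hsep, hcov⟩ := ih _ hss
      refine ⟨insert p S, ?_, ?_, ?_⟩
      · exact Finset.insert_subset hp (hSP.trans (Finset.filter_subset _ _))
      · intro a ha b hb hab
        rcases Finset.mem_insert.1 ha with ha' | ha'
        · rcases Finset.mem_insert.1 hb with hb' | hb'
          · exact absurd (ha'.trans hb'.symm) hab
          · have := (Finset.mem_filter.1 (hSP hb')).2
            rw [ha', dist_comm]; exact this
        · rcases Finset.mem_insert.1 hb with hb' | hb'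
          · have := (Finset.mem_filter.1 (hSP ha')).2
            rwa [hb']
          · exact hsep a ha' b hb' hab
      · intro q hq
        by_cases h : r ≤ dist q p
        · obtain ⟨z, hz, hzd⟩ := hcov q (Finset.mem_filter.2 ⟨hq, h⟩)
          exact ⟨z, Finset.mem_insert_of_mem hz, hzd⟩
        · exact ⟨p, Finset.mem_insert_self _ _, lt_of_not_ge h⟩

/-- Coordinate bound by Euclidean distance. -/
lemma coord_le_dist {d : ℕ} (x y : EuclideanSpace ℝ (Fin d)) (i : Fin d) :
    |x i - y i| ≤ dist x y := by
  rw [EuclideanSpace.dist_eq, ← Real.sqrt_sq_eq_abs]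
  apply Real.sqrt_le_sqrt
  have := Finset.single_le_sum (f := fun i => (dist (x i) (y i))^2)
    (fun i _ => sq_nonneg _) (Finset.mem_univ i)
  simpa [Real.dist_eq, sq_abs] using this

/-- A segment from a point of `E` to a point outside `E` meets the frontier. -/
lemma segment_frontier {d : ℕ} {E : Set (EuclideanSpace ℝ (Fin d))}
    {x y : EuclideanSpace ℝ (Fin d)} (hx : x ∈ E) (hy : y ∉ E) :
    ∃ z ∈ segment ℝ x y, z ∈ frontier E := by
  by_contra h
  push_neg at h
  have hpc : IsPreconnected (segment ℝ x y) := (convex_segment x y).isPreconnected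
  have hsub : segment ℝ x y ⊆ interior E ∪ (closure E)ᶜ := by
    intro z hz
    have hzf := h z hz
    by_cases hcl : z ∈ closure E
    · left
      rcases (em (z ∈ interior E)) with h1 | h1
      · exact h1
      · exact absurd ⟨hcl, h1⟩ hzf
    · right; exact hcl
  obtain ⟨z, hz1, hz2, hz3⟩ := hpc (interior E) (closure E)ᶜ isOpen_interior
    isClosed_closure.isOpen_compl hsub
    ⟨x, left_mem_segment ℝ x y, by
      rcases hsub (left_mem_segment ℝ x y) with h' | h'
      · exact h'
      · exact absurd (subset_closure hx) h'⟩
    ⟨y, right_mem_segment ℝ x y, by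
      rcases hsub (right_mem_segment ℝ x y) with h' | h'
      · exact absurd (interior_subset h') hy
      · exact h'⟩
  exact hz3 (interior_subset_closure hz2)

/-- Counting separated points in a lower Ahlfors regular set. -/
lemma sep_count {d : ℕ} {X : Set (EuclideanSpace ℝ (Fin d))} (hX : MeasurableSet X)
    {η κ : ℝ} (hA : LowerAhlfors d X η κ) {r : ℝ} (hr : 0 < r) (hrη : r / 2 ≤ η)
    (S : Finset (EuclideanSpace ℝ (Fin d))) (hSX : ∀ z ∈ S, z ∈ X)
    (hsep : ∀ a ∈ S, ∀ b ∈ S, a ≠ b → r ≤ dist a b) :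
    (S.card : ℝ≥0∞) * ENNReal.ofReal (κ * (r / 2) ^ ((d : ℝ) - 1)) ≤ μH[(d : ℝ) - 1] X := by
  classical
  have hdisj : (↑S : Set (EuclideanSpace ℝ (Fin d))).PairwiseDisjoint
      (fun z => X ∩ Metric.ball z (r / 2)) := by
    intro a ha b hb hab
    apply Set.disjoint_left.2
    rintro w ⟨-, hwa⟩ ⟨-, hwb⟩
    have : dist a b < r := by
      calc dist a b ≤ dist a w + dist w b := dist_triangle _ _ _
      _ < r / 2 + r / 2 := by
          rw [Metric.mem_ball] at hwa hwb
          rw [dist_comm a w]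
          linarith
      _ = r := by ring
    exact absurd (hsep a ha b hb hab) (not_le.2 this)
  have hmeas : ∀ z ∈ S, MeasurableSet (X ∩ Metric.ball z (r / 2)) :=
    fun z _ => hX.inter Metric.isOpen_ball.measurableSet
  calc (S.card : ℝ≥0∞) * ENNReal.ofReal (κ * (r / 2) ^ ((d : ℝ) - 1))
      = ∑ z ∈ S, ENNReal.ofReal (κ * (r / 2) ^ ((d : ℝ) - 1)) := by
        rw [Finset.sum_const, nsmul_eq_mul]
    _ ≤ ∑ z ∈ S, μH[(d : ℝ) - 1] (X ∩ Metric.ball z (r / 2)) := by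
        apply Finset.sum_le_sum
        intro z hz
        exact hA z (hSX z hz) (r / 2) (by linarith) hrη
    _ = μH[(d : ℝ) - 1] (⋃ z ∈ S, X ∩ Metric.ball z (r / 2)) := by
        rw [measure_biUnion_finset hdisj hmeas]
    _ ≤ μH[(d : ℝ) - 1] X := by
        apply measure_mono
        simp only [Set.iUnion_subset_iff]
        intro z hz
        exact Set.inter_subset_left

/-- The finset of integer vectors within coordinatewise distance `R` of a center `c`. -/
def boxF {d : ℕ} (c : Fin d → ℝ) (R : ℝ) : Finset (Fin d → ℤ) :=
  Fintype.piFinset (fun i => Finset.Icc ⌈c i - R⌉ ⌊c i + R⌋)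

lemma mem_boxF {d : ℕ} (c : Fin d → ℝ) (R : ℝ) (k : Fin d → ℤ)
    (hk : ∀ i, |(k i : ℝ) - c i| ≤ R) : k ∈ boxF c R := by
  rw [boxF, Fintype.mem_piFinset]
  intro i
  have h := hk i
  rw [abs_le] at h
  rw [Finset.mem_Icc]
  exact ⟨Int.ceil_le.2 (by linarith [h.1]), Int.le_floor.2 (by linarith [h.2])⟩

lemma boxF_card_le {d : ℕ} (c : Fin d → ℝ) {R : ℝ} (hR : 0 < R) :
    ((boxF c R).card : ℝ) ≤ (2 * R + 1) ^ d := by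
  rw [boxF, Fintype.card_piFinset]
  push_cast
  calc (∏ i, ((Finset.Icc ⌈c i - R⌉ ⌊c i + R⌋).card : ℝ))
      ≤ ∏ i : Fin d, (2 * R + 1) := by
        apply Finset.prod_le_prod (fun i _ => by positivity)
        intro i _
        rw [Int.card_Icc]
        have h1 : (⌊c i + R⌋ + 1 - ⌈c i - R⌉ : ℤ) ≤ ⌊2 * R⌋ + 1 := by
          have : (⌊c i + R⌋ : ℝ) - ⌈c i - R⌉ ≤ 2 * R := by
            linarith [Int.floor_le (c i + R), Int.le_ceil (c i - R)]
          have h2 : (⌊c i + R⌋ - ⌈c i - R⌉ : ℤ) ≤ ⌊2 * R⌋ := by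
            apply Int.le_floor.2; push_cast; linarith
          omega
        have h3 : (⌊c i + R⌋ + 1 - ⌈c i - R⌉).toNat ≤ (⌊2 * R⌋ + 1).toNat :=
          Int.toNat_le_toNat h1
        have h4 : (((⌊2 * R⌋ + 1).toNat : ℤ) : ℝ) ≤ 2 * R + 1 := by
          rw [Int.toNat_of_nonneg (by positivity)]
          push_cast
          linarith [Int.floor_le (2 * R)]
        calc ((⌊c i + R⌋ + 1 - ⌈c i - R⌉).toNat : ℝ)
            ≤ (((⌊2 * R⌋ + 1).toNat : ℤ) : ℝ) := by exact_mod_cast h3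
          _ ≤ 2 * R + 1 := h4
      _ = (2 * R + 1) ^ d := by rw [Finset.prod_const]; simp

lemma Mdist_eq_norm {d : ℕ} (W : Fin d → ℝ) (j k : Fin d → ℤ) (y : EuclideanSpace ℝ (Fin d))
    (w : EuclideanSpace ℝ (Fin d)) (hw : ∀ i, w i = (k i : ℝ) - lenD (W i) (j i) * y i) :
    Mdist d W j k y = ‖w‖ := by
  rw [Mdist, EuclideanSpace.norm_eq]
  congr 1
  apply Finset.sum_congr rfl
  intro i _
  rw [hw i, Real.norm_eq_abs, sq_abs]

/-- Coordinatewise bound on `Mdist`. -/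
lemma coord_le_Mdist {d : ℕ} (W : Fin d → ℝ) (j k : Fin d → ℤ) (y : EuclideanSpace ℝ (Fin d))
    (i : Fin d) : |(k i : ℝ) - lenD (W i) (j i) * y i| ≤ Mdist d W j k y := by
  set w : EuclideanSpace ℝ (Fin d) := WithLp.toLp 2 (fun i' => (k i' : ℝ) - lenD (W i') (j i') * y i') with hwdef
  rw [Mdist_eq_norm W j k y w (fun _ => rfl)]
  have h := coord_le_dist w 0 i
  rw [dist_zero_right] at h
  have h0 : (0 : EuclideanSpace ℝ (Fin d)) i = 0 := rfl
  rw [h0, sub_zero] at h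
  exact h

/-- Crossing lemma : if `k` is `s`-close (under `M_j`) to a point of `E` and to a point
outside `E`, it is `s`-close to a frontier point. -/
lemma cross {d : ℕ} (W : Fin d → ℝ) (j k : Fin d → ℤ) {E : Set (EuclideanSpace ℝ (Fin d))}
    {x y : EuclideanSpace ℝ (Fin d)} {s : ℝ} (hx : x ∈ E) (hy : y ∉ E)
    (hxs : Mdist d W j k x < s) (hys : Mdist d W j k y < s) :
    ∃ z ∈ frontier E, Mdist d W j k z < s := by
  obtain ⟨z, hzseg, hzf⟩ := segment_frontier hx hy
  refine ⟨z, hzf, ?_⟩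
  obtain ⟨a, b, ha, hb, hab, hz⟩ := hzseg
  set u : EuclideanSpace ℝ (Fin d) := WithLp.toLp 2 (fun i => (k i : ℝ) - lenD (W i) (j i) * x i) with hu
  set v : EuclideanSpace ℝ (Fin d) := WithLp.toLp 2 (fun i => (k i : ℝ) - lenD (W i) (j i) * y i) with hv
  rw [Mdist_eq_norm W j k x u (fun i => rfl)] at hxs
  rw [Mdist_eq_norm W j k y v (fun i => rfl)] at hys
  have hwz : ∀ i, (a • u + b • v) i = (k i : ℝ) - lenD (W i) (j i) * z i := by
    intro i
    have hzi : z i = a * x i + b * y i := by rw [← hz]; simp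
    simp only [hu, hv, PiLp.add_apply, PiLp.smul_apply, PiLp.toLp_apply, smul_eq_mul]
    linear_combination (k i : ℝ) * hab + lenD (W i) (j i) * hzi
  rw [Mdist_eq_norm W j k z (a • u + b • v) hwz]
  rcases eq_or_lt_of_le ha with h0 | h0
  · have hb1 : b = 1 := by linarith
    rw [← h0, hb1]
    simpa using hys
  · have h1 : ‖a • u + b • v‖ ≤ ‖a • u‖ + ‖b • v‖ := norm_add_le _ _
    have h2 : ‖a • u‖ = a * ‖u‖ := by
      rw [norm_smul, Real.norm_eq_abs, abs_of_nonneg ha]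
    have h3 : ‖b • v‖ = b * ‖v‖ := by
      rw [norm_smul, Real.norm_eq_abs, abs_of_nonneg hb]
    have p1 := mul_lt_mul_of_pos_left hxs h0
    have p2 := mul_le_mul_of_nonneg_left hys.le hb
    have habs : a * s + b * s = s := by rw [← add_mul, hab, one_mul]
    linarith [h1, h2, h3, p1, p2, habs]

/-- **Lemma 3.4.** Cardinality of the medium index set
`Γ^{med} = {(j,k) : min_i |D_{j_i}| ≥ δ, dist(k, M_j E_L) < s, dist(k, M_j E_L^c) < s}`:
`#Γ^{med} ≤ C_d max{W_max, 1/η_{∂E}}^{d-1} (|∂E|/κ_{∂E}) max{log(W_max/δ),1}^d s^d`. -/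
theorem stmt_10 (d : ℕ) :
    ∃ C : ℝ, 0 < C ∧
      ∀ (E : Set (EuclideanSpace ℝ (Fin d))) (η κ L s δ : ℝ) (W : Fin d → ℝ),
        IsCompact E → 1 ≤ η → 0 < κ → LowerAhlfors d (frontier E) η κ →
        (∀ i, 0 < W i) → (∀ i, W i ≤ L) → 1 ≤ s → 0 < δ → δ < 1 →
        {jk : (Fin d → ℤ) × (Fin d → ℤ) |
            (∀ i, δ ≤ lenD (W i) (jk.1 i)) ∧
            (∃ x ∈ discretization d L E, Mdist d W jk.1 jk.2 x < s) ∧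
            (∃ y : EuclideanSpace ℝ (Fin d),
              latticePt d L y ∧ y ∉ E ∧ Mdist d W jk.1 jk.2 y < s)}.Finite ∧
        ENNReal.ofReal (κ *
            ({jk : (Fin d → ℤ) × (Fin d → ℤ) |
              (∀ i, δ ≤ lenD (W i) (jk.1 i)) ∧
              (∃ x ∈ discretization d L E, Mdist d W jk.1 jk.2 x < s) ∧
              (∃ y : EuclideanSpace ℝ (Fin d),
                latticePt d L y ∧ y ∉ E ∧ Mdist d W jk.1 jk.2 y < s)}.ncard : ℝ)) ≤
          ENNReal.ofReal (C * max (⨆ i, W i) (1 / η) ^ ((d : ℝ) - 1) *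
              max (Real.log ((⨆ i, W i) / δ)) 1 ^ d * s ^ d) *
            μH[(d : ℝ) - 1] (frontier E) := by
  classical
  refine ⟨7 ^ d * 2 ^ d * (3 + 2 * Real.sqrt d) ^ d + 1, by positivity, ?_⟩
  intro E η κ L s δ W hE hη hκ hA hW hWL hs hδ hδ1
  set Γ : Set ((Fin d → ℤ) × (Fin d → ℤ)) :=
    {jk : (Fin d → ℤ) × (Fin d → ℤ) |
      (∀ i, δ ≤ lenD (W i) (jk.1 i)) ∧
      (∃ x ∈ discretization d L E, Mdist d W jk.1 jk.2 x < s) ∧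
      (∃ y : EuclideanSpace ℝ (Fin d),
        latticePt d L y ∧ y ∉ E ∧ Mdist d W jk.1 jk.2 y < s)} with hΓdef
  -- trivial case : Γ = ∅
  by_cases hΓe : Γ = ∅
  · rw [hΓe]
    simp only [Set.finite_empty, true_and, Set.ncard_empty, Nat.cast_zero, mul_zero,
      ENNReal.ofReal_zero]
    exact zero_le
  -- Γ is nonempty : get a point of E and a point outside E
  obtain ⟨p₀, hp₀⟩ := Set.nonempty_iff_ne_empty.2 hΓe
  obtain ⟨hp₀1, ⟨x₀, hx₀E, hx₀s⟩, ⟨y₀, hy₀l, hy₀E, hy₀s⟩⟩ := hp₀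
  -- d = 0 is impossible then
  rcases Nat.eq_zero_or_pos d with rfl | hd
  · exact absurd (Subsingleton.elim x₀ y₀ ▸ hx₀E.1) hy₀E
  have hdne : Nonempty (Fin d) := ⟨⟨0, hd⟩⟩
  -- basic quantities
  set Wmax : ℝ := ⨆ i, W i with hWmaxdef
  have hWmax_ge : ∀ i, W i ≤ Wmax := fun i => le_ciSup (Set.finite_range W).bddAbove i
  have hWmax_pos : 0 < Wmax := lt_of_lt_of_le (hW ⟨0, hd⟩) (hWmax_ge ⟨0, hd⟩)
  set Λ : ℝ := max (Real.log (Wmax / δ)) 1 with hΛdef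
  have hΛ1 : 1 ≤ Λ := le_max_right _ _
  have hΛpos : 0 < Λ := lt_of_lt_of_le one_pos hΛ1
  set T : ℤ := ⌈(2 : ℝ) * Λ⌉ with hTdef
  have hT0 : 0 ≤ T := Int.ceil_nonneg (by positivity)
  -- bound on admissible j-coordinates
  have j_bound : ∀ i (m : ℤ), δ ≤ lenD (W i) m → ((m.natAbs : ℝ)) ≤ 2 * Λ := by
    intro i m hm
    have h1 : δ * 2 ^ m.natAbs ≤ Wmax := by
      have := lenD_le_pow (hW i) m
      have h2 : δ ≤ W i / 2 ^ m.natAbs := le_trans hm this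
      have hp : (0:ℝ) < 2 ^ m.natAbs := by positivity
      calc δ * 2 ^ m.natAbs ≤ (W i / 2 ^ m.natAbs) * 2 ^ m.natAbs := by
            exact mul_le_mul_of_nonneg_right h2 hp.le
        _ = W i := by field_simp
        _ ≤ Wmax := hWmax_ge i
    have h2 : (2:ℝ) ^ m.natAbs ≤ Wmax / δ := by
      rw [le_div_iff₀ hδ]
      linarith [mul_comm δ ((2:ℝ) ^ m.natAbs)]
    have h3 : (m.natAbs : ℝ) * Real.log 2 ≤ Real.log (Wmax / δ) := by
      calc (m.natAbs : ℝ) * Real.log 2 = Real.log (2 ^ m.natAbs) := by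
            rw [Real.log_pow]
        _ ≤ Real.log (Wmax / δ) := Real.log_le_log (by positivity) h2
    have hlog2 : (0.6931471803 : ℝ) < Real.log 2 := Real.log_two_gt_d9
    have hL : Real.log (Wmax / δ) ≤ Λ := le_max_left _ _
    nlinarith [(Nat.cast_nonneg m.natAbs : (0:ℝ) ≤ (m.natAbs : ℝ))]
  set JF : Finset (Fin d → ℤ) := Fintype.piFinset (fun _ => Finset.Icc (-T) T) with hJFdef
  have hJmem : ∀ p ∈ Γ, p.1 ∈ JF := by
    intro p hp
    rw [hJFdef, Fintype.mem_piFinset]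
    intro i
    have := j_bound i (p.1 i) (hp.1 i)
    have hT : ((p.1 i).natAbs : ℝ) ≤ (T : ℝ) := le_trans this (Int.le_ceil _)
    have hT' : ((p.1 i).natAbs : ℤ) ≤ T := by
      have h2 : (((p.1 i).natAbs : ℤ) : ℝ) ≤ ((T : ℤ) : ℝ) := by
        rw [Int.cast_natCast]; exact hT
      exact Int.cast_le.mp h2
    rw [Finset.mem_Icc]
    omega
  have hJcard : (JF.card : ℝ) ≤ (7 * Λ) ^ d := by
    rw [hJFdef, Fintype.card_piFinset]
    push_cast
    calc (∏ _i : Fin d, ((Finset.Icc (-T) T).card : ℝ))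
        ≤ ∏ _i : Fin d, (7 * Λ) := by
          apply Finset.prod_le_prod (fun i _ => by positivity)
          intro i _
          rw [Int.card_Icc]
          have h1 : (T + 1 - (-T)).toNat = (2 * T + 1).toNat := by ring_nf
          rw [h1]
          have h2 : (((2 * T + 1).toNat : ℤ) : ℝ) = 2 * (T:ℝ) + 1 := by
            rw [Int.toNat_of_nonneg (by omega)]; push_cast; ring
          have h3 : (T : ℝ) ≤ 2 * Λ + 1 := (Int.ceil_lt_add_one ((2:ℝ) * Λ)).le
          calc (((2 * T + 1).toNat : ℕ) : ℝ) = 2 * (T:ℝ) + 1 := by exact_mod_cast h2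
            _ ≤ 4 * Λ + 3 := by linarith
            _ ≤ 7 * Λ := by linarith
      _ = (7 * Λ) ^ d := by rw [Finset.prod_const]; simp
  -- E is bounded
  obtain ⟨ρ, hρ⟩ := (Metric.isBounded_iff_subset_closedBall 0).1 hE.isBounded
  -- membership finset for k (used for finiteness)
  have hKmem : ∀ p ∈ Γ, p.2 ∈ boxF (fun _ => (0:ℝ)) (s + Wmax * max ρ 0) := by
    intro p hp
    obtain ⟨-, ⟨x, hxE, hxs⟩, -⟩ := hp
    apply mem_boxF
    intro i
    have h1 : |(p.2 i : ℝ) - lenD (W i) (p.1 i) * x i| ≤ Mdist d W p.1 p.2 x :=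
      coord_le_Mdist W p.1 p.2 x i
    have hxρ : |x i| ≤ max ρ 0 := by
      have h2 := coord_le_dist x 0 i
      have h3 : dist x (0 : EuclideanSpace ℝ (Fin d)) ≤ ρ :=
        Metric.mem_closedBall.1 (hρ hxE.1)
      have : (0 : EuclideanSpace ℝ (Fin d)) i = 0 := rfl
      rw [this] at h2
      simp only [sub_zero] at h2
      exact le_trans h2 (le_max_of_le_left h3)
    have hlen : 0 < lenD (W i) (p.1 i) := lenD_pos (hW i) _
    have hlen2 : lenD (W i) (p.1 i) ≤ Wmax := by
      have := lenD_le_half (hW i) (p.1 i)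
      have := hWmax_ge i
      linarith
    have h4 : |lenD (W i) (p.1 i) * x i| ≤ Wmax * max ρ 0 := by
      rw [abs_mul, abs_of_pos hlen]
      apply mul_le_mul hlen2 hxρ (abs_nonneg _) hWmax_pos.le
    calc |(p.2 i : ℝ) - 0| = |((p.2 i : ℝ) - lenD (W i) (p.1 i) * x i)
          + lenD (W i) (p.1 i) * x i| := by ring_nf
      _ ≤ |(p.2 i : ℝ) - lenD (W i) (p.1 i) * x i| + |lenD (W i) (p.1 i) * x i| := abs_add_le _ _
      _ ≤ Mdist d W p.1 p.2 x + Wmax * max ρ 0 := add_le_add h1 h4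
      _ ≤ s + Wmax * max ρ 0 := by linarith
  -- Finiteness
  have hΓfin : Γ.Finite := by
    apply Set.Finite.subset
      ((JF.finite_toSet.prod (boxF (fun _ => (0:ℝ)) (s + Wmax * max ρ 0)).finite_toSet))
    intro p hp
    exact ⟨hJmem p hp, hKmem p hp⟩
  refine ⟨hΓfin, ?_⟩
  -- measure infinite case
  set μ := μH[(d : ℝ) - 1] (frontier E) with hμdef
  set maxWη : ℝ := max Wmax (1 / η) with hmaxdef
  have hmaxpos : 0 < maxWη := lt_of_lt_of_le hWmax_pos (le_max_left _ _)
  have hfactor : 0 < (7:ℝ) ^ d * 2 ^ d * (3 + 2 * Real.sqrt d) ^ d + 1 := by positivity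
  by_cases hμtop : μ = ⊤
  · rw [hμtop]
    rw [ENNReal.mul_top]
    · exact le_top
    · rw [Ne, ENNReal.ofReal_eq_zero, not_le]
      have h2 : (0:ℝ) < maxWη ^ ((d:ℝ) - 1) := Real.rpow_pos_of_pos hmaxpos _
      have h3 : (0:ℝ) < Λ ^ d := by positivity
      have h4 : (0:ℝ) < s ^ d := by positivity
      calc (0:ℝ) < ((7:ℝ) ^ d * 2 ^ d * (3 + 2 * Real.sqrt d) ^ d + 1)
          * (maxWη ^ ((d:ℝ) - 1)) * (Λ ^ d) * (s ^ d) := by positivity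
        _ = _ := by ring
  -- main case
  -- the key radius
  set r : ℝ := min η (1 / Wmax) with hrdef
  have hr0 : 0 < r := lt_min (by linarith) (by positivity)
  have hrη : r ≤ η := min_le_left _ _
  have hrW : r * Wmax ≤ 1 := by
    have : r ≤ 1 / Wmax := min_le_right _ _
    calc r * Wmax ≤ (1 / Wmax) * Wmax := mul_le_mul_of_nonneg_right this hWmax_pos.le
      _ = 1 := by field_simp
  have hrinv : r⁻¹ = maxWη := by
    rw [hrdef, hmaxdef]
    rcases le_total η (1 / Wmax) with h | h
    · rw [min_eq_left h, max_eq_right]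
      · rw [one_div]
      · calc Wmax = (1 / Wmax)⁻¹ := by rw [one_div, inv_inv]
          _ ≤ η⁻¹ := by
            apply inv_anti₀ (by linarith) h
          _ = 1 / η := by rw [one_div]
    · rw [min_eq_right h, max_eq_left]
      · rw [one_div, inv_inv]
      · calc 1 / η = η⁻¹ := by rw [one_div]
          _ ≤ (1 / Wmax)⁻¹ := by
            apply inv_anti₀ (by positivity) h
          _ = Wmax := by rw [one_div, inv_inv]
  -- key geometric claim
  have hclaim : ∀ p ∈ Γ, ∃ z ∈ frontier E, Mdist d W p.1 p.2 z < s := by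
    rintro p ⟨-, ⟨x, hxE, hxs⟩, ⟨y, -, hyE, hys⟩⟩
    exact cross W p.1 p.2 hxE.1 hyE hxs hys
  -- witness function
  set zfun : ((Fin d → ℤ) × (Fin d → ℤ)) → EuclideanSpace ℝ (Fin d) := fun p =>
    if h : ∃ z ∈ frontier E, Mdist d W p.1 p.2 z < s then h.choose else x₀ with hzfundef
  have hzfun1 : ∀ p ∈ Γ, zfun p ∈ frontier E ∧ Mdist d W p.1 p.2 (zfun p) < s := by
    intro p hp
    have h := hclaim p hp
    rw [hzfundef]
    simp only [dif_pos h]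
    exact ⟨h.choose_spec.1, h.choose_spec.2⟩
  set G : Finset ((Fin d → ℤ) × (Fin d → ℤ)) := hΓfin.toFinset with hGdef
  have hGΓ : ∀ p ∈ G, p ∈ Γ := fun p hp => hΓfin.mem_toFinset.1 hp
  set e : ℝ := (d : ℝ) - 1 with hedef
  have he0 : 0 ≤ e := by
    rw [hedef]
    have : (1:ℝ) ≤ d := by exact_mod_cast hd
    linarith
  set Rb : ℝ := s + Real.sqrt d with hRbdef
  have hRb0 : 0 < Rb := by
    have := Real.sqrt_nonneg (d:ℝ)
    rw [hRbdef]; linarith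
  have hsqrtd1 : 1 ≤ Real.sqrt d := by
    rw [show (1:ℝ) = Real.sqrt 1 by rw [Real.sqrt_one]]
    apply Real.sqrt_le_sqrt
    exact_mod_cast hd
  -- the per-fiber bound
  have hfiber : ∀ j ∈ JF,
      ((G.filter (fun p => p.1 = j)).card : ℝ) * (κ * (r/2) ^ e) ≤
        μ.toReal * (2 * Rb + 1) ^ d := by
    intro j _
    set Fj := G.filter (fun p => p.1 = j) with hFjdef
    set P : Finset (EuclideanSpace ℝ (Fin d)) := Fj.image zfun with hPdef
    obtain ⟨S, hSP, hsep, hcov⟩ := sep_cover r hr0 P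
    have hSfr : ∀ z ∈ S, z ∈ frontier E := by
      intro z hz
      obtain ⟨p, hp, rfl⟩ := Finset.mem_image.1 (hSP hz)
      exact (hzfun1 p (hGΓ p (Finset.mem_filter.1 hp).1)).1
    -- measure bound on S
    have hScount := sep_count (isClosed_frontier.measurableSet) hA hr0
      (by linarith) S hSfr hsep
    have hSreal : (S.card : ℝ) * (κ * (r/2) ^ e) ≤ μ.toReal := by
      have h1 : ((S.card : ℝ≥0∞) * ENNReal.ofReal (κ * (r / 2) ^ ((d:ℝ) - 1))).toReal
          ≤ μ.toReal := ENNReal.toReal_mono hμtop hScount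
      rw [ENNReal.toReal_mul, ENNReal.toReal_ofReal] at h1
      · simpa [hedef] using h1
      · have : (0:ℝ) < (r/2) ^ ((d:ℝ)-1) := Real.rpow_pos_of_pos (by linarith) _
        positivity
    -- counting the fiber
    have hsub : Fj.image Prod.snd ⊆ S.biUnion (fun z =>
        boxF (fun i => lenD (W i) (j i) * z i) Rb) := by
      intro k hk
      obtain ⟨p, hpFj, rfl⟩ := Finset.mem_image.1 hk
      obtain ⟨hpG, hpj⟩ := Finset.mem_filter.1 hpFj
      have hpΓ := hGΓ p hpG
      obtain ⟨hzf, hzs⟩ := hzfun1 p hpΓ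
      rw [hpj] at hzs
      have hzP : zfun p ∈ P := Finset.mem_image_of_mem _ hpFj
      obtain ⟨zs, hzsS, hzsd⟩ := hcov _ hzP
      apply Finset.mem_biUnion.2 ⟨zs, hzsS, ?_⟩
      apply mem_boxF
      intro i
      have h1 : |(p.2 i : ℝ) - lenD (W i) (j i) * (zfun p) i| ≤ Mdist d W j p.2 (zfun p) :=
        coord_le_Mdist W j p.2 (zfun p) i
      have h2 : |(zfun p) i - zs i| ≤ dist (zfun p) zs := coord_le_dist _ _ i
      have hlen : 0 < lenD (W i) (j i) := lenD_pos (hW i) _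
      have hlen2 : lenD (W i) (j i) ≤ Wmax / 2 := by
        have := lenD_le_half (hW i) (j i)
        have := hWmax_ge i
        linarith
      have h3 : |lenD (W i) (j i) * ((zfun p) i - zs i)| ≤ (Wmax / 2) * r := by
        rw [abs_mul, abs_of_pos hlen]
        apply mul_le_mul hlen2 (le_trans h2 hzsd.le) (abs_nonneg _) (by positivity)
      have h4 : (Wmax / 2) * r ≤ 1 / 2 := by nlinarith
      calc |(p.2 i : ℝ) - lenD (W i) (j i) * zs i|
          = |((p.2 i : ℝ) - lenD (W i) (j i) * (zfun p) i)
            + lenD (W i) (j i) * ((zfun p) i - zs i)| := by ring_nf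
        _ ≤ |(p.2 i : ℝ) - lenD (W i) (j i) * (zfun p) i|
            + |lenD (W i) (j i) * ((zfun p) i - zs i)| := abs_add_le _ _
        _ ≤ Mdist d W j p.2 (zfun p) + (Wmax / 2) * r := add_le_add h1 h3
        _ ≤ s + 1/2 := by linarith
        _ ≤ Rb := by rw [hRbdef]; linarith
    have hinj : (Fj.image Prod.snd).card = Fj.card := by
      apply Finset.card_image_of_injOn
      intro p hp q hq hpq
      have hp1 := (Finset.mem_filter.1 hp).2
      have hq1 := (Finset.mem_filter.1 hq).2
      exact Prod.ext (hp1.trans hq1.symm) hpq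
    have hcard1 : (Fj.card : ℝ) ≤ (S.card : ℝ) * (2 * Rb + 1) ^ d := by
      have h1 : Fj.card ≤ (S.biUnion (fun z =>
          boxF (fun i => lenD (W i) (j i) * z i) Rb)).card := by
        rw [← hinj]
        exact Finset.card_le_card hsub
      have h2 : ((S.biUnion (fun z =>
          boxF (fun i => lenD (W i) (j i) * z i) Rb)).card : ℝ)
          ≤ ∑ z ∈ S, ((boxF (fun i => lenD (W i) (j i) * z i) Rb).card : ℝ) := by
        exact_mod_cast Nat.cast_le.2 (Finset.card_biUnion_le)
      have h3 : ∑ z ∈ S, ((boxF (fun i => lenD (W i) (j i) * z i) Rb).card : ℝ)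
          ≤ ∑ _z ∈ S, (2 * Rb + 1) ^ d :=
        Finset.sum_le_sum (fun z _ => boxF_card_le _ hRb0)
      rw [Finset.sum_const, nsmul_eq_mul] at h3
      calc (Fj.card : ℝ) ≤ _ := Nat.cast_le.2 h1
        _ ≤ _ := h2
        _ ≤ (S.card : ℝ) * (2 * Rb + 1) ^ d := h3
    have hκr : 0 < κ * (r/2) ^ e := by
      have : (0:ℝ) < (r/2) ^ e := Real.rpow_pos_of_pos (by linarith) _
      positivity
    calc (Fj.card : ℝ) * (κ * (r/2) ^ e)
        ≤ ((S.card : ℝ) * (2 * Rb + 1) ^ d) * (κ * (r/2) ^ e) :=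
          mul_le_mul_of_nonneg_right hcard1 hκr.le
      _ = ((S.card : ℝ) * (κ * (r/2) ^ e)) * (2 * Rb + 1) ^ d := by ring
      _ ≤ μ.toReal * (2 * Rb + 1) ^ d := by
          apply mul_le_mul_of_nonneg_right hSreal (by positivity)
  -- sum over fibers
  have hGcard : (G.card : ℝ) * (κ * (r/2) ^ e) ≤
      (JF.card : ℝ) * (μ.toReal * (2 * Rb + 1) ^ d) := by
    have h1 : G.card = ∑ j ∈ JF, (G.filter (fun p => p.1 = j)).card :=
      Finset.card_eq_sum_card_fiberwise (fun p hp => hJmem p (hGΓ p hp))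
    have h2 : (G.card : ℝ) = ∑ j ∈ JF, ((G.filter (fun p => p.1 = j)).card : ℝ) := by
      rw [h1]; push_cast; ring
    rw [h2, Finset.sum_mul]
    calc ∑ j ∈ JF, ((G.filter (fun p => p.1 = j)).card : ℝ) * (κ * (r/2) ^ e)
        ≤ ∑ _j ∈ JF, μ.toReal * (2 * Rb + 1) ^ d := Finset.sum_le_sum hfiber
      _ = (JF.card : ℝ) * (μ.toReal * (2 * Rb + 1) ^ d) := by
          rw [Finset.sum_const, nsmul_eq_mul]
  -- convert to the claimed bound
  have hμ0 : 0 ≤ μ.toReal := ENNReal.toReal_nonneg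
  have hrpow : ((r/2) ^ e)⁻¹ = 2 ^ e * maxWη ^ e := by
    rw [← Real.inv_rpow (by linarith)]
    have : (r/2)⁻¹ = 2 * maxWη := by
      rw [← hrinv]
      field_simp
    rw [this, Real.mul_rpow (by norm_num) hmaxpos.le]
  have h2e : (2:ℝ) ^ e ≤ 2 ^ d := by
    rw [← Real.rpow_natCast 2 d]
    apply Real.rpow_le_rpow_of_exponent_le one_le_two
    rw [hedef]; linarith
  have hRb1 : 2 * Rb + 1 ≤ (3 + 2 * Real.sqrt d) * s := by
    rw [hRbdef]
    have h5 : Real.sqrt d ≤ Real.sqrt d * s := le_mul_of_one_le_right (by positivity) hs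
    nlinarith
  have hncard : Γ.ncard = G.card := by
    rw [hGdef]
    exact Set.ncard_eq_toFinset_card _ hΓfin
  -- the main real inequality
  have hmain : κ * (Γ.ncard : ℝ) ≤
      ((7:ℝ) ^ d * 2 ^ d * (3 + 2 * Real.sqrt d) ^ d + 1) * maxWη ^ e * Λ ^ d * s ^ d
        * μ.toReal := by
    have hrpow_pos : (0:ℝ) < (r/2) ^ e := Real.rpow_pos_of_pos (by linarith) _
    have step1 : κ * (G.card : ℝ) ≤
        (JF.card : ℝ) * (μ.toReal * (2 * Rb + 1) ^ d) * ((r/2) ^ e)⁻¹ := by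
      have heq : κ * (G.card : ℝ) = ((G.card : ℝ) * (κ * (r/2) ^ e)) * ((r/2) ^ e)⁻¹ := by
        field_simp
      rw [heq]
      exact mul_le_mul_of_nonneg_right hGcard (inv_nonneg.2 hrpow_pos.le)
    have step2 : (JF.card : ℝ) * (μ.toReal * (2 * Rb + 1) ^ d) * ((r/2) ^ e)⁻¹ ≤
        (7 * Λ) ^ d * (μ.toReal * ((3 + 2 * Real.sqrt d) * s) ^ d) * (2 ^ d * maxWη ^ e) := by
      rw [hrpow]
      have hB1 : ((2:ℝ) * Rb + 1) ^ d ≤ ((3 + 2 * Real.sqrt d) * s) ^ d := by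
        apply pow_le_pow_left₀ (by positivity) hRb1
      have hmaxe : (0:ℝ) < maxWη ^ e := Real.rpow_pos_of_pos hmaxpos _
      have h2e0 : (0:ℝ) < (2:ℝ) ^ e := Real.rpow_pos_of_pos (by norm_num) _
      apply mul_le_mul
      · exact mul_le_mul hJcard (mul_le_mul_of_nonneg_left hB1 hμ0) (by positivity)
          (by positivity)
      · exact mul_le_mul_of_nonneg_right h2e hmaxe.le
      · positivity
      · positivity
    rw [hncard]
    calc κ * (G.card : ℝ) ≤ _ := step1
      _ ≤ _ := step2
      _ = (7 ^ d * 2 ^ d * (3 + 2 * Real.sqrt d) ^ d) * maxWη ^ e * Λ ^ d * s ^ d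
          * μ.toReal := by
          rw [mul_pow, mul_pow]
          ring
      _ ≤ ((7:ℝ) ^ d * 2 ^ d * (3 + 2 * Real.sqrt d) ^ d + 1) * maxWη ^ e * Λ ^ d * s ^ d
          * μ.toReal := by
          have hmaxe : (0:ℝ) ≤ maxWη ^ e := (Real.rpow_pos_of_pos hmaxpos _).le
          have : (0:ℝ) ≤ Λ ^ d * s ^ d * μ.toReal := by positivity
          nlinarith [hmaxe]
  -- conclude in ℝ≥0∞
  calc ENNReal.ofReal (κ * (Γ.ncard : ℝ))
      ≤ ENNReal.ofReal ((((7:ℝ) ^ d * 2 ^ d * (3 + 2 * Real.sqrt d) ^ d + 1) * maxWη ^ e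
          * Λ ^ d * s ^ d) * μ.toReal) := by
        apply ENNReal.ofReal_le_ofReal
        calc κ * (Γ.ncard : ℝ) ≤ _ := hmain
          _ = _ := by ring
    _ = ENNReal.ofReal (((7:ℝ) ^ d * 2 ^ d * (3 + 2 * Real.sqrt d) ^ d + 1) * maxWη ^ e
          * Λ ^ d * s ^ d) * ENNReal.ofReal μ.toReal := by
        rw [ENNReal.ofReal_mul]
        have hmaxe : (0:ℝ) ≤ maxWη ^ e := (Real.rpow_pos_of_pos hmaxpos _).le
        positivity
    _ ≤ ENNReal.ofReal (((7:ℝ) ^ d * 2 ^ d * (3 + 2 * Real.sqrt d) ^ d + 1) * maxWη ^ e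
          * Λ ^ d * s ^ d) * μ := by
        gcongr; exact ENNReal.ofReal_toReal_le
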